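/- The number of permutations \(\sigma \in \mathfrak{S}_n\) whose first local minimum occurs at an even position (equivalently, desarrangements: permutations with \(\sigma(1) > \sigma(2) > \cdots > \sigma(2k) < \sigma(2k+1)\) for some \(k \ge 1\), where the initial decreasing run has even length) equals the derangement number \(d_n\), for all \(n \ge 1\). -/

import Mathlib

def wordVal {n : ℕ} (σ : Equiv.Perm (Fin n)) (i : ℕ) : ℕ :=
  if h : i - 1 < n ∧ 1 ≤ i then ((σ ⟨i - 1, h.1⟩ : ℕ) + 1) else n + 1

def IsDesarrangement {n : ℕ} (σ : Equiv.Perm (Fin n)) : Prop :=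
  Even (sInf {i : ℕ | 1 ≤ i ∧ wordVal σ i < wordVal σ (i + 1)})

namespace DesAux
open Equiv Finset

variable {n : ℕ}

def ascSet (σ : Perm (Fin n)) : Set ℕ := {i : ℕ | 1 ≤ i ∧ wordVal σ i < wordVal σ (i + 1)}

noncomputable def firstAsc (σ : Perm (Fin n)) : ℕ := sInf (ascSet σ)

lemma wordVal_of_le (σ : Perm (Fin n)) {i : ℕ} (h1 : 1 ≤ i) (h2 : i ≤ n) :
    wordVal σ i = (σ ⟨i - 1, by omega⟩ : ℕ) + 1 := by
  rw [wordVal, dif_pos ⟨by omega, h1⟩]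

lemma wordVal_of_gt (σ : Perm (Fin n)) {i : ℕ} (h : ¬ (1 ≤ i ∧ i ≤ n)) :
    wordVal σ i = n + 1 := by
  rw [wordVal, dif_neg]; omega

lemma mem_ascSet_iff {σ : Perm (Fin n)} {i : ℕ} (h1 : 1 ≤ i) (h2 : i < n) :
    i ∈ ascSet σ ↔ (σ ⟨i - 1, by omega⟩ : ℕ) < σ ⟨i, h2⟩ := by
  have e1 := wordVal_of_le σ h1 (le_of_lt h2)
  have e2 := wordVal_of_le σ (i := i + 1) (by omega) (by omega)
  simp only [ascSet, Set.mem_setOf_eq, e1, e2, Nat.add_sub_cancel]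
  omega

lemma n_mem_ascSet (hn : 1 ≤ n) (σ : Perm (Fin n)) : n ∈ ascSet σ := by
  refine ⟨hn, ?_⟩
  rw [wordVal_of_le σ hn le_rfl, wordVal_of_gt σ (by omega)]
  have := (σ ⟨n - 1, by omega⟩).isLt
  omega

lemma not_mem_ascSet_of_gt {σ : Perm (Fin n)} {i : ℕ} (h : n < i) : i ∉ ascSet σ := by
  intro ⟨h1, h2⟩
  rw [wordVal_of_gt σ (by omega), wordVal_of_gt σ (by omega)] at h2
  omega

lemma firstAsc_le (hn : 1 ≤ n) (σ : Perm (Fin n)) : firstAsc σ ≤ n :=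
  Nat.sInf_le (n_mem_ascSet hn σ)

lemma one_le_firstAsc (hn : 1 ≤ n) (σ : Perm (Fin n)) : 1 ≤ firstAsc σ :=
  (Nat.sInf_mem ⟨n, n_mem_ascSet hn σ⟩).1

/-- `σ` is strictly decreasing on the first `i` (0-based: positions `< i`) entries. -/
def DecRun (i : ℕ) (σ : Perm (Fin n)) : Prop :=
  ∀ j k : Fin n, j < k → (k : ℕ) < i → σ k < σ j

instance (i : ℕ) : DecidablePred (DecRun (n := n) i) := fun _ =>
  inferInstanceAs (Decidable (∀ _ _, _ → _ → _))

lemma decRun_of_adj {i : ℕ} {σ : Perm (Fin n)}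
    (h : ∀ m : ℕ, 1 ≤ m → m < i → (hm : m < n) → σ ⟨m, hm⟩ < σ ⟨m - 1, by omega⟩) :
    DecRun i σ := by
  have key : ∀ k : ℕ, (hk : k < n) → k < i → ∀ j : ℕ, (hj : j < k) →
      σ ⟨k, hk⟩ < σ ⟨j, by omega⟩ := by
    intro k
    induction k with
    | zero => omega
    | succ m ih =>
      intro hk hki j hj
      have hm : m < n := by omega
      have step : σ ⟨m + 1, hk⟩ < σ ⟨m, hm⟩ := by
        have := h (m + 1) (by omega) hki hk
        simpa using this
      rcases Nat.lt_or_ge j m with hj' | hj'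
      · exact step.trans (ih hm (by omega) j hj')
      · have : j = m := by omega
        subst this
        exact step
  intro j k hjk hki
  have := key k k.isLt hki j (by exact hjk)
  simpa using this

lemma le_firstAsc_iff (hn : 1 ≤ n) {σ : Perm (Fin n)} {i : ℕ} (hi : i ≤ n) :
    i ≤ firstAsc σ ↔ DecRun i σ := by
  constructor
  · intro h
    refine decRun_of_adj fun m h1 h2 hm => ?_
    have hmem : m ∉ ascSet σ := Nat.notMem_of_lt_sInf (lt_of_lt_of_le h2 h)
    rw [mem_ascSet_iff h1 hm] at hmem
    have hne : ((σ ⟨m, hm⟩ : Fin n) : ℕ) ≠ ((σ ⟨m - 1, by omega⟩ : Fin n) : ℕ) := by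
      intro he
      have : σ ⟨m, hm⟩ = σ ⟨m - 1, by omega⟩ := Fin.ext he
      have := σ.injective this
      rw [Fin.mk.injEq] at this
      omega
    rw [Fin.lt_def]
    omega
  · intro h
    by_contra hc
    push_neg at hc
    have hmem := Nat.sInf_mem (⟨n, n_mem_ascSet hn σ⟩ : (ascSet σ).Nonempty)
    set m := firstAsc σ with hm
    have h1 : 1 ≤ m := hmem.1
    have hmn : m < n := lt_of_lt_of_le hc hi
    rw [show sInf (ascSet σ) = m from rfl] at hmem
    rw [mem_ascSet_iff h1 hmn] at hmem
    have := h ⟨m - 1, by omega⟩ ⟨m, hmn⟩ (by simp [Fin.lt_def]; omega) hc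
    omega


section Count

variable {n i : ℕ}

lemma card_compl_image (hi : i ≤ n) (f : Fin (n - i) ↪ Fin n) :
    ((univ.image f)ᶜ : Finset (Fin n)).card = i := by
  rw [card_compl, card_image_of_injective _ f.injective, card_univ, Fintype.card_fin,
    Fintype.card_fin]
  omega

noncomputable def backPerm (hi : i ≤ n) (f : Fin (n - i) ↪ Fin n) : Perm (Fin n) := by
  refine Equiv.ofBijective (fun p => if h : (p : ℕ) < i then
    ((univ.image f)ᶜ : Finset (Fin n)).orderEmbOfFin (card_compl_image hi f)
      ⟨i - 1 - p, by omega⟩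
    else f ⟨(p : ℕ) - i, by omega⟩) (Finite.injective_iff_bijective.mp ?_)
  intro p q hpq
  by_cases hp : (p : ℕ) < i <;> by_cases hq : (q : ℕ) < i <;>
    simp only [dif_pos, dif_neg, hp, hq] at hpq
  · have := (((univ.image f)ᶜ : Finset (Fin n)).orderEmbOfFin
      (card_compl_image hi f)).injective hpq
    rw [Fin.mk.injEq] at this
    exact Fin.ext (by omega)
  · exfalso
    have h1 := Finset.orderEmbOfFin_mem ((univ.image f)ᶜ : Finset (Fin n))
      (card_compl_image hi f) ⟨i - 1 - p, by omega⟩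
    rw [hpq] at h1
    rw [Finset.mem_compl] at h1
    exact h1 (mem_image_of_mem f (mem_univ _))
  · exfalso
    have h1 := Finset.orderEmbOfFin_mem ((univ.image f)ᶜ : Finset (Fin n))
      (card_compl_image hi f) ⟨i - 1 - q, by omega⟩
    rw [← hpq, Finset.mem_compl] at h1
    exact h1 (mem_image_of_mem f (mem_univ _))
  · have := f.injective hpq
    rw [Fin.mk.injEq] at this
    exact Fin.ext (by omega)

lemma backPerm_apply (hi : i ≤ n) (f : Fin (n - i) ↪ Fin n) (p : Fin n) :
    backPerm hi f p = if h : (p : ℕ) < i then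
      ((univ.image f)ᶜ : Finset (Fin n)).orderEmbOfFin (card_compl_image hi f)
        ⟨i - 1 - p, by omega⟩
      else f ⟨(p : ℕ) - i, by omega⟩ := rfl

lemma decRun_backPerm (hi : i ≤ n) (f : Fin (n - i) ↪ Fin n) : DecRun i (backPerm hi f) := by
  intro j k hjk hki
  have hji : (j : ℕ) < i := lt_trans hjk hki
  rw [backPerm_apply, backPerm_apply, dif_pos hji, dif_pos hki]
  refine (((univ.image f)ᶜ : Finset (Fin n)).orderEmbOfFin
    (card_compl_image hi f)).strictMono ?_
  rw [Fin.lt_def]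
  simp only []
  have : (j : ℕ) < k := hjk
  omega

noncomputable def decRunEquiv (hi : i ≤ n) :
    {σ : Perm (Fin n) // DecRun i σ} ≃ (Fin (n - i) ↪ Fin n) where
  toFun σ := ⟨fun j => σ.1 ⟨i + j, by omega⟩, fun j1 j2 h => by
    have := σ.1.injective h
    rw [Fin.mk.injEq] at this
    exact Fin.ext (by omega)⟩
  invFun f := ⟨backPerm hi f, decRun_backPerm hi f⟩
  right_inv f := by
    ext j
    show ((backPerm hi f ⟨i + (j : ℕ), by omega⟩ : Fin n) : ℕ) = (f j : ℕ)
    rw [backPerm_apply, dif_neg (by simp only [Fin.val_mk]; omega)]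
    congr 1
    exact Fin.ext (by simp)
  left_inv σ := by
    obtain ⟨σ, hσ⟩ := σ
    ext p
    simp only []
    set f : Fin (n - i) ↪ Fin n := ⟨fun j => σ ⟨i + j, by omega⟩, fun j1 j2 h => by
      have := σ.injective h
      rw [Fin.mk.injEq] at this
      exact Fin.ext (by omega)⟩ with hf
    rw [backPerm_apply]
    split_ifs with hp
    · -- orderEmbOfFin of the complement agrees with σ reversed
      have hg : ∀ x : Fin i, (fun q : Fin i => σ ⟨i - 1 - (q : ℕ), by omega⟩) x ∈
          ((univ.image f)ᶜ : Finset (Fin n)) := by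
        intro q
        rw [Finset.mem_compl, Finset.mem_image]
        rintro ⟨j, -, hj⟩
        have := σ.injective hj
        rw [Fin.mk.injEq] at this
        omega
      have hmono : StrictMono (fun q : Fin i => σ ⟨i - 1 - (q : ℕ), by omega⟩) := by
        intro q1 q2 hq
        have hq' : (q1 : ℕ) < q2 := hq
        exact hσ ⟨i - 1 - (q2 : ℕ), by omega⟩ ⟨i - 1 - (q1 : ℕ), by omega⟩
          (by rw [Fin.lt_def]; simp; omega) (by simp; omega)
      have := Finset.orderEmbOfFin_unique (card_compl_image hi f) hg hmono
      have heval := congrFun this.symm ⟨i - 1 - (p : ℕ), by omega⟩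
      rw [heval]
      refine congrArg Fin.val (congrArg σ (Fin.ext ?_))
      show i - 1 - (i - 1 - (p : ℕ)) = (p : ℕ)
      omega
    · show (σ ⟨i + ((p : ℕ) - i), by omega⟩ : ℕ) = (σ p : ℕ)
      refine congrArg Fin.val (congrArg σ (Fin.ext ?_))
      show i + ((p : ℕ) - i) = (p : ℕ)
      omega

lemma card_decRun (hi : i ≤ n) :
    Nat.card {σ : Perm (Fin n) // DecRun i σ} = n.descFactorial (n - i) := by
  rw [Nat.card_congr (decRunEquiv hi), Nat.card_eq_fintype_card,
    Fintype.card_embedding_eq, Fintype.card_fin, Fintype.card_fin]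

end Count


section Fibers

variable {n : ℕ}

lemma card_filter_decRun {i : ℕ} (hi : i ≤ n) :
    (univ.filter (fun σ : Perm (Fin n) => DecRun i σ)).card = n.descFactorial (n - i) := by
  have h := card_decRun (n := n) hi
  rwa [Nat.card_eq_fintype_card, Fintype.card_subtype] at h

lemma decRun_mono {i : ℕ} {σ : Perm (Fin n)} (h : DecRun (i + 1) σ) : DecRun i σ :=
  fun j k hjk hki => h j k hjk (by omega)

/-- `M i` = number of permutations decreasing on the first `i` entries (0 for `i > n`). -/
def M (n i : ℕ) : ℕ := if i ≤ n then n.descFactorial (n - i) else 0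

lemma M_antitone (n i : ℕ) : M n (i + 1) ≤ M n i := by
  unfold M
  split_ifs with h1 h2 h2
  · have hni : n - i = (n - (i+1)) + 1 := by omega
    rw [hni, Nat.descFactorial_succ]
    have h3 : 1 ≤ n - (n - (i + 1)) := by omega
    calc n.descFactorial (n - (i+1)) = 1 * n.descFactorial (n - (i+1)) := (one_mul _).symm
      _ ≤ (n - (n - (i + 1))) * n.descFactorial (n - (i+1)) :=
          Nat.mul_le_mul_right _ h3
  · exact (h2 (by omega)).elim
  · exact Nat.zero_le _
  · exact le_rfl

lemma card_fiber (hn : 1 ≤ n) {i : ℕ} (h1 : 1 ≤ i) (h2 : i ≤ n) :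
    (univ.filter (fun σ : Perm (Fin n) => firstAsc σ = i)).card = M n i - M n (i + 1) := by
  rcases lt_or_eq_of_le h2 with hlt | heq
  · have hset : (univ.filter (fun σ : Perm (Fin n) => firstAsc σ = i)) =
        (univ.filter (fun σ : Perm (Fin n) => DecRun i σ)) \
        (univ.filter (fun σ : Perm (Fin n) => DecRun (i + 1) σ)) := by
      ext σ
      simp only [mem_sdiff, mem_filter, mem_univ, true_and]
      constructor
      · intro h
        refine ⟨(le_firstAsc_iff hn h2).mp (le_of_eq h.symm), fun hc => ?_⟩
        have := (le_firstAsc_iff hn (by omega)).mpr hc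
        omega
      · rintro ⟨ha, hb⟩
        have hge : i ≤ firstAsc σ := (le_firstAsc_iff hn h2).mpr ha
        have hlt' : firstAsc σ < i + 1 := by
          by_contra hc
          exact hb ((le_firstAsc_iff hn (by omega)).mp (by omega))
        omega
    rw [hset, card_sdiff_of_subset (by
      intro σ hσ
      simp only [mem_filter, mem_univ, true_and] at hσ ⊢
      exact decRun_mono hσ),
      card_filter_decRun h2, card_filter_decRun (by omega)]
    unfold M
    rw [if_pos h2, if_pos (by omega)]
  · rw [heq]
    have hset : (univ.filter (fun σ : Perm (Fin n) => firstAsc σ = n)) =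
        (univ.filter (fun σ : Perm (Fin n) => DecRun n σ)) := by
      ext σ
      simp only [mem_filter, mem_univ, true_and]
      constructor
      · intro h
        exact (le_firstAsc_iff hn le_rfl).mp (le_of_eq h.symm)
      · intro h
        have := (le_firstAsc_iff hn le_rfl).mpr h
        have := firstAsc_le hn σ
        omega
    rw [hset, card_filter_decRun le_rfl]
    unfold M
    rw [if_pos le_rfl, if_neg (by omega), Nat.sub_self, Nat.descFactorial_zero]

noncomputable instance : DecidablePred (IsDesarrangement (n := n)) := fun σ =>
  inferInstanceAs (Decidable (Even _))

lemma isDes_iff (σ : Perm (Fin n)) : IsDesarrangement σ ↔ Even (firstAsc σ) := Iff.rfl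

lemma card_des (hn : 1 ≤ n) :
    (univ.filter (IsDesarrangement (n := n))).card =
      ∑ i ∈ Icc 1 n, if Even i then M n i - M n (i + 1) else 0 := by
  rw [Finset.card_eq_sum_card_fiberwise (f := firstAsc) (t := Icc 1 n) (fun σ hσ => by
    simp only [mem_coe, mem_Icc]
    exact ⟨one_le_firstAsc hn σ, firstAsc_le hn σ⟩)]
  refine Finset.sum_congr rfl fun i hi => ?_
  rw [mem_Icc] at hi
  by_cases he : Even i
  · rw [if_pos he, ← card_fiber hn hi.1 hi.2]
    congr 1
    ext σ
    simp only [mem_filter, mem_univ, true_and, isDes_iff]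
    constructor
    · rintro ⟨-, h⟩; exact h
    · intro h; exact ⟨h ▸ he, h⟩
  · rw [if_neg he]
    rw [Finset.card_eq_zero]
    ext σ
    simp only [mem_filter, mem_univ, true_and, isDes_iff, notMem_empty, iff_false, not_and]
    intro hd hf
    exact he (hf ▸ hd)

end Fibers

lemma alt_sum (g : ℕ → ℤ) (N : ℕ) :
    ∑ i ∈ Icc 1 N, (if Even i then g i - g (i + 1) else 0) =
      (∑ k ∈ Icc 2 (N + 1), (-1 : ℤ) ^ k * g k) - (if Even N then 0 else g (N + 1)) := by
  induction N with
  | zero => simp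
  | succ N ih =>
    rw [Finset.sum_Icc_succ_top (by omega : 1 ≤ N + 1), ih,
      Finset.sum_Icc_succ_top (by omega : 2 ≤ N + 1 + 1)]
    rcases Nat.even_or_odd N with h | h
    · have h1 : ¬ Even (N + 1) := by simp [Nat.even_add_one, h]
      have h2 : ((-1 : ℤ)) ^ (N + 1 + 1) = 1 :=
        (by simp [Nat.even_add_one, h] : Even (N + 1 + 1)).neg_one_pow
      rw [if_pos h, if_neg h1, if_neg h1, h2]
      ring
    · have hN : ¬ Even N := Nat.not_even_iff_odd.mpr h
      have h1 : Even (N + 1) := Nat.even_add_one.mpr hN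
      have h2 : ((-1 : ℤ)) ^ (N + 1 + 1) = -1 :=
        (Nat.not_even_iff_odd.mp (by simp [Nat.even_add_one, hN])).neg_one_pow
      rw [if_neg hN, if_pos h1, if_pos h1, h2]
      ring

lemma M_top (n : ℕ) : M n (n + 1) = 0 := by
  unfold M; rw [if_neg (by omega)]

lemma sum_M_eq (n : ℕ) (hn : 1 ≤ n) :
    ((∑ i ∈ Icc 1 n, if Even i then M n i - M n (i + 1) else 0 : ℕ) : ℤ) =
      (numDerangements n : ℤ) := by
  have hcast : ((∑ i ∈ Icc 1 n, if Even i then M n i - M n (i + 1) else 0 : ℕ) : ℤ) =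
      ∑ i ∈ Icc 1 n, (if Even i then (M n i : ℤ) - (M n (i + 1) : ℤ) else 0) := by
    rw [Nat.cast_sum]
    refine Finset.sum_congr rfl fun i _ => ?_
    split_ifs with h
    · exact Nat.cast_sub (M_antitone n i)
    · simp
  rw [hcast, alt_sum (fun k => (M n k : ℤ)) n]
  have hM0 : ((M n (n + 1) : ℕ) : ℤ) = 0 := by rw [M_top]; simp
  rw [Finset.sum_Icc_succ_top (by omega : 2 ≤ n + 1), hM0, mul_zero, add_zero]
  rw [ite_self, sub_zero]
  rw [numDerangements_sum n]
  rw [Finset.range_eq_Ico, ← Finset.sum_Ico_consecutive _ (by omega : 0 ≤ 2) (by omega : 2 ≤ n + 1)]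
  have h01 : ∑ k ∈ Finset.Ico 0 2, (-1 : ℤ) ^ k * Nat.ascFactorial (k + 1) (n - k) = 0 := by
    show ∑ k ∈ Finset.range 2, (-1 : ℤ) ^ k * Nat.ascFactorial (k + 1) (n - k) = 0
    rw [Finset.sum_range_succ, Finset.sum_range_one]
    have e1 : Nat.ascFactorial 1 n = n.factorial := Nat.one_ascFactorial n
    have e2 : Nat.ascFactorial 2 (n - 1) = n.factorial := by
      have := Nat.factorial_mul_ascFactorial 1 (n - 1)
      simp only [Nat.factorial_one, one_mul] at this
      rw [show (1 : ℕ) + 1 = 2 from rfl] at this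
      rw [this, show 1 + (n - 1) = n by omega]
    simp [e1, e2]
  rw [h01, zero_add, Finset.Ico_add_one_right_eq_Icc]
  refine (Finset.sum_congr rfl fun k hk => ?_).symm
  rw [mem_Icc] at hk
  congr 1
  have : M n k = Nat.ascFactorial (k + 1) (n - k) := by
    unfold M
    rw [if_pos hk.2, ← Nat.add_descFactorial_eq_ascFactorial k (n - k),
      Nat.add_sub_cancel' hk.2]
  rw [this]

end DesAux

theorem stmt_6 (n : ℕ) (hn : 1 ≤ n) :
    Nat.card {σ : Equiv.Perm (Fin n) // IsDesarrangement σ} =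
      Nat.card {σ : Equiv.Perm (Fin n) // ∀ i, σ i ≠ i} := by
  have hR : Nat.card {σ : Equiv.Perm (Fin n) // ∀ i, σ i ≠ i} = numDerangements n := by
    rw [Nat.card_congr (Equiv.subtypeEquivRight (fun σ =>
      (by simp [derangements, Set.mem_setOf_eq] :
        (∀ i, σ i ≠ i) ↔ σ ∈ derangements (Fin n))))]
    rw [Nat.card_eq_fintype_card]
    exact card_derangements_fin_eq_numDerangements
  have hL : Nat.card {σ : Equiv.Perm (Fin n) // IsDesarrangement σ} =
      (Finset.univ.filter (IsDesarrangement (n := n))).card := by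
    rw [Nat.card_eq_fintype_card, Fintype.card_subtype]
  rw [hL, hR, DesAux.card_des hn]
  exact_mod_cast DesAux.sum_M_eq n hn
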